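/- If the singleton {α} is conflict-confining for an inconsistent knowledge base K = ⟨T, A⟩ (i.e., adding α to any repair of K preserves consistency), then every repair R of the extended knowledge base ⟨T, A ∪ {α}⟩ contains the assertion α. -/

import Mathlib

/-- `R` is a repair of `⟨T, B⟩`: a `T`-consistent subset of `B` that is
maximal among `T`-consistent subsets of `B`. -/
def IsRepair {X : Type*} [DecidableEq X] (Cons : Finset X → Prop) (B R : Finset X) : Prop :=
  R ⊆ B ∧ Cons R ∧ ∀ R' : Finset X, R ⊆ R' → R' ⊆ B → Cons R' → R' = R

/-- Every consistent subset of `B` extends to a repair of `B`. -/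
lemma exists_repair_ext {X : Type*} [DecidableEq X] (Cons : Finset X → Prop)
    (B S : Finset X) (hSB : S ⊆ B) (hS : Cons S) :
    ∃ R : Finset X, S ⊆ R ∧ IsRepair Cons B R := by
  classical
  let P : Finset X → Prop := fun T => S ⊆ T ∧ T ⊆ B ∧ Cons T
  have hfin : {T : Finset X | P T}.Finite := by
    apply Set.Finite.subset (B.powerset.finite_toSet)
    intro T hT
    simp only [Finset.coe_powerset, Set.mem_preimage, Set.mem_powerset_iff]
    exact_mod_cast hT.2.1
  obtain ⟨R, hR, hmax⟩ := Set.Finite.exists_maximalFor (fun T => T.card)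
    {T | P T} hfin ⟨S, Finset.Subset.refl S, hSB, hS⟩
  refine ⟨R, hR.1, hR.2.1, hR.2.2, ?_⟩
  intro R' hRR' hR'B hR'c
  have hP : P R' := ⟨hR.1.trans hRR', hR'B, hR'c⟩
  have := hmax (j := R') hP (Finset.card_le_card hRR')
  exact (Finset.eq_of_subset_of_card_le hRR' this).symm

theorem stmt_0 {X : Type*} [DecidableEq X]
    (Cons : Finset X → Prop)
    (hdc : ∀ S S' : Finset X, S ⊆ S' → Cons S' → Cons S)
    (A : Finset X) (α : X)
    (hinc : ¬ Cons A)
    (hcc : ∀ R : Finset X, IsRepair Cons A R → Cons (R ∪ {α})) :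
    ∀ R : Finset X, IsRepair Cons (A ∪ {α}) R → α ∈ R := by
  intro R hR
  by_contra hα
  have hRA : R ⊆ A := by
    intro x hx
    rcases Finset.mem_union.mp (hR.1 hx) with h | h
    · exact h
    · exact absurd (Finset.mem_singleton.mp h ▸ hx) hα
  obtain ⟨R₀, hRR₀, hrep⟩ := exists_repair_ext Cons A R hRA hR.2.1
  have hc : Cons (R₀ ∪ {α}) := hcc R₀ hrep
  have hsub : R₀ ∪ {α} ⊆ A ∪ {α} := Finset.union_subset_union hrep.1 (subset_refl _)
  have := hR.2.2 (R₀ ∪ {α}) (hRR₀.trans Finset.subset_union_left) hsub hc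
  exact hα (this ▸ Finset.mem_union_right _ (Finset.mem_singleton_self α))
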